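/- Suppose the image of a bicontrolled homomorphism between Γ-filtered modules is the kernel K of a bicontrolled quotient map F₁ → F, with F₁ lean and insular, and give F the quotient filtration F(S) = F₁(S)/(K ∩ F₁(S)). Then F is lean and insular. -/

import Mathlib

open Metric Set

/-- The closed metric `r`-enlargement of a subset `S` of a metric space. -/
def enl {X : Type*} [PseudoMetricSpace X] (S : Set X) (r : ℝ) : Set X :=
  {x | ∃ s ∈ S, dist x s ≤ r}

section Defs

variable {X : Type*} [PseudoMetricSpace X] (R : Type*) [Ring R]

/-- An `X`-filtered `R`-module structure on `M`: a monotone assignment of submodules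
with `F ∅ = ⊥` and `F X` being the whole module. -/
def IsXFilteredModule {M : Type*} [AddCommGroup M] [Module R M]
    (F : Set X → Submodule R M) : Prop :=
  Monotone F ∧ F ∅ = ⊥ ∧ F Set.univ = ⊤

/-- `F` is `D`-lean: `F(S) ⊆ ∑_{x ∈ S} F(x[D])` for every `S ⊆ X`. -/
def IsLean {M : Type*} [AddCommGroup M] [Module R M]
    (F : Set X → Submodule R M) (D : ℝ) : Prop :=
  ∀ S : Set X, F S ≤ ⨆ x ∈ S, F (closedBall x D)

/-- `F` is `δ`-scattered: `F(X) ⊆ ∑_{x ∈ X} F(x[δ])`. -/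
def IsScattered {M : Type*} [AddCommGroup M] [Module R M]
    (F : Set X → Submodule R M) (δ : ℝ) : Prop :=
  F Set.univ ≤ ⨆ x : X, F (closedBall x δ)

/-- `F` is `d`-insular: `F(S) ∩ F(U) ⊆ F(S[d] ∩ U[d])` for all `S, U ⊆ X`. -/
def IsInsular {M : Type*} [AddCommGroup M] [Module R M]
    (F : Set X → Submodule R M) (d : ℝ) : Prop :=
  ∀ S U : Set X, F S ⊓ F U ≤ F (enl S d ∩ enl U d)

/-- `F` is locally finitely generated: `F(T)` is a finitely generated `R`-module
for every bounded `T ⊆ X`. -/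
def IsLocallyFG {M : Type*} [AddCommGroup M] [Module R M]
    (F : Set X → Submodule R M) : Prop :=
  ∀ T : Set X, Bornology.IsBounded T → (F T).FG

/-- `f` is `b`-bicontrolled: `f(F(S)) ⊆ G(S[b])` and `f(F(X)) ∩ G(S) ⊆ f(F(S[b]))`
for all `S ⊆ X`. -/
def IsBicontrolled {M N : Type*} [AddCommGroup M] [Module R M]
    [AddCommGroup N] [Module R N]
    (F : Set X → Submodule R M) (G : Set X → Submodule R N)
    (f : M →ₗ[R] N) (b : ℝ) : Prop :=
  (∀ S : Set X, (F S).map f ≤ G (enl S b)) ∧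
  (∀ S : Set X, (F Set.univ).map f ⊓ G S ≤ (F (enl S b)).map f)

end Defs

lemma subset_enl {X : Type*} [PseudoMetricSpace X] (S : Set X) {r : ℝ} (hr : 0 ≤ r) :
    S ⊆ enl S r := fun x hx => ⟨x, hx, by simpa using hr⟩

lemma enl_enl {X : Type*} [PseudoMetricSpace X] (S : Set X) (a c : ℝ) :
    enl (enl S a) c ⊆ enl S (a + c) := by
  rintro x ⟨y, ⟨s, hs, hys⟩, hxy⟩
  exact ⟨s, hs, by linarith [dist_triangle x y s]⟩

lemma enl_closedBall {X : Type*} [PseudoMetricSpace X] (x : X) (r b : ℝ) :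
    enl (closedBall x r) b ⊆ closedBall x (r + b) := by
  rintro y ⟨z, hz, hyz⟩
  simp only [mem_closedBall] at hz ⊢
  linarith [dist_triangle y z x]

/-- given an exact sequence `F₂ → F₁ → F → 0` of `X`-filtered modules with
both maps bicontrolled and `F₁`, `F₂` lean and insular (so the kernel
`K = im(F₂ → F₁) = ker(F₁ → F)` is the bicontrolled image of the lean module `F₂`),
the quotient `F` with the quotient filtration `F(S) = F₁(S)/(K ∩ F₁(S))`, i.e. the
image filtration `S ↦ p(E₁(S))`, is lean and insular. -/
theorem quotient_filtration_lean_insular {X : Type*} [PseudoMetricSpace X]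
    (R : Type*) [Ring R]
    {M₂ M₁ M : Type*} [AddCommGroup M₂] [Module R M₂] [AddCommGroup M₁] [Module R M₁]
    [AddCommGroup M] [Module R M]
    (E₂ : Set X → Submodule R M₂) (E₁ : Set X → Submodule R M₁)
    (d : M₂ →ₗ[R] M₁) (p : M₁ →ₗ[R] M)
    (hE₂ : IsXFilteredModule R E₂) (hE₁ : IsXFilteredModule R E₁)
    (hsurj : Function.Surjective p)
    (hexact : LinearMap.range d = LinearMap.ker p)
    (b : ℝ) (hb : 0 ≤ b)
    (hd : IsBicontrolled R E₂ E₁ d b)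
    (hp : IsBicontrolled R E₁ (fun S => (E₁ S).map p) p b)
    (D₁ D₂ d₁ d₂ : ℝ) (hD₁ : 0 ≤ D₁) (hD₂ : 0 ≤ D₂) (hd₁ : 0 ≤ d₁) (hd₂ : 0 ≤ d₂)
    (hlean₁ : IsLean R E₁ D₁) (hins₁ : IsInsular R E₁ d₁)
    (hlean₂ : IsLean R E₂ D₂) (hins₂ : IsInsular R E₂ d₂) :
    (∃ D, 0 ≤ D ∧ IsLean R (fun S => (E₁ S).map p) D) ∧
    (∃ d', 0 ≤ d' ∧ IsInsular R (fun S => (E₁ S).map p) d') :=  by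
  constructor
  · refine ⟨D₁, hD₁, fun S => ?_⟩
    calc (E₁ S).map p ≤ (⨆ x ∈ S, E₁ (closedBall x D₁)).map p :=
          Submodule.map_mono (hlean₁ S)
      _ ≤ ⨆ x ∈ S, (E₁ (closedBall x D₁)).map p := by
          simp [Submodule.map_iSup]
  · refine ⟨D₂ + 2*b + d₁, by linarith, fun S U => ?_⟩
    rintro m ⟨hmS, hmU⟩
    obtain ⟨a, ha, rfl⟩ := hmS
    obtain ⟨a', ha', hpa'⟩ := hmU
    have hkmem : a - a' ∈ LinearMap.ker p ⊓ E₁ (S ∪ U) := by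
      refine ⟨?_, Submodule.sub_mem _ (hE₁.1 subset_union_left ha)
        (hE₁.1 subset_union_right ha')⟩
      simp [LinearMap.mem_ker, map_sub, hpa']
    have hKle : LinearMap.ker p ⊓ E₁ (S ∪ U) ≤
        (LinearMap.ker p ⊓ E₁ (enl S (D₂ + 2*b))) ⊔
        (LinearMap.ker p ⊓ E₁ (enl U (D₂ + 2*b))) := by
      have h1 : LinearMap.ker p ⊓ E₁ (S ∪ U) ≤ (E₂ (enl (S ∪ U) b)).map d := by
        have h := hd.2 (S ∪ U)
        rwa [hE₂.2.2, Submodule.map_top, hexact] at h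
      refine h1.trans ?_
      have h2 : (E₂ (enl (S ∪ U) b)).map d ≤
          ⨆ x ∈ enl (S ∪ U) b, (E₂ (closedBall x D₂)).map d := by
        refine (Submodule.map_mono (hlean₂ _)).trans ?_
        simp [Submodule.map_iSup]
      refine h2.trans (iSup₂_le fun x hx => ?_)
      have hsub : (E₂ (closedBall x D₂)).map d ≤
          LinearMap.ker p ⊓ E₁ (closedBall x (D₂ + b)) := by
        refine le_inf ?_ ((hd.1 _).trans (hE₁.1 (enl_closedBall x D₂ b)))
        rw [← hexact]
        rintro y ⟨z, _, rfl⟩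
        exact LinearMap.mem_range_self d z
      obtain ⟨t, ht, hdt⟩ := hx
      have hball : ∀ V : Set X, t ∈ V → closedBall x (D₂ + b) ⊆ enl V (D₂ + 2*b) := by
        intro V htV y hy
        simp only [mem_closedBall] at hy
        exact ⟨t, htV, by linarith [dist_triangle y x t]⟩
      cases ht with
      | inl h => exact le_sup_of_le_left (hsub.trans (inf_le_inf le_rfl (hE₁.1 (hball S h))))
      | inr h => exact le_sup_of_le_right (hsub.trans (inf_le_inf le_rfl (hE₁.1 (hball U h))))
    obtain ⟨kS, hkS, kU, hkU, hsum⟩ := Submodule.mem_sup.mp (hKle hkmem)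
    have hA : a - kS ∈ E₁ (enl S (D₂ + 2*b)) :=
      Submodule.sub_mem _ (hE₁.1 (subset_enl S (by linarith)) ha) hkS.2
    have hB : a - kS ∈ E₁ (enl U (D₂ + 2*b)) := by
      have hk : kU = a - a' - kS := by rw [← hsum]; abel
      have heq : a - kS = a' + kU := by rw [hk]; abel
      rw [heq]
      exact Submodule.add_mem _ (hE₁.1 (subset_enl U (by linarith)) ha') hkU.2
    have hins := hins₁ _ _ ⟨hA, hB⟩
    refine Submodule.mem_map.mpr ⟨a - kS, hE₁.1 ?_ hins, ?_⟩
    · exact Set.inter_subset_inter (enl_enl S _ _) (enl_enl U _ _)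
    · have h0 := LinearMap.mem_ker.mp hkS.1
      simp [map_sub, h0]
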